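/- Let A be an integral domain with a nonnegative ℚ-valued valuation v, and let x₁,…,x_d ∈ A be elements with v(x_i) > 0 for all i. Suppose x₁,…,x_d form an almost regular sequence in A (more precisely, one may permute and replace elements by their powers and the resulting sequences are almost regular). Then for every t ≥ 0, the monomial x₁^t ⋯ x_d^t does not belong to the ideal (x₁^{t+1},…,x_d^{t+1})A. -/

import Mathlib

/-- An `A`-module `M` is almost zero with respect to `v` if every `m ∈ M` is annihilated
by elements of `A` of arbitrarily small valuation.  A sequence `y` is almost regular if
each colon module `((y_1,…,y_{i-1}) : y_i)/(y_1,…,y_{i-1})` is almost zero, i.e. any `a`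
with `a * y i ∈ (y_j : j < i)` is multiplied into `(y_j : j < i)` by elements of
arbitrarily small positive valuation. -/
def AlmostRegular {A : Type*} [CommRing A] (v : A → WithTop ℚ)
    {n : ℕ} (y : Fin n → A) : Prop :=
  ∀ (i : Fin n) (a : A), a * y i ∈ Ideal.span (y '' {j | j < i}) →
    ∀ ε : ℚ, 0 < ε → ∃ c : A, v c < (ε : WithTop ℚ) ∧
      c * a ∈ Ideal.span (y '' {j | j < i})

/-- The valuation of `1` is zero. -/
lemma stmt2_val_one {A : Type*} [CommRing A] [Nontrivial A] (v : A → WithTop ℚ)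
    (hv_top : ∀ a : A, v a = ⊤ ↔ a = 0)
    (hv_mul : ∀ a b : A, v (a * b) = v a + v b) : v 1 = 0 := by
  rcases hq : v 1 with _ | q
  · exact absurd ((hv_top 1).mp hq) one_ne_zero
  · have h := hv_mul 1 1
    rw [one_mul, hq] at h
    rw [WithTop.some_eq_coe] at h
    have hq' : q = q + q := by exact_mod_cast h
    have hq0 : q = 0 := by linarith
    rw [hq0]
    rfl

/-- A lower bound on valuations of generators passes to the span. -/
lemma stmt2_le_val_of_mem_span {A : Type*} [CommRing A] (v : A → WithTop ℚ)
    (hv_top : ∀ a : A, v a = ⊤ ↔ a = 0)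
    (hv_mul : ∀ a b : A, v (a * b) = v a + v b)
    (hv_add : ∀ a b : A, min (v a) (v b) ≤ v (a + b))
    (hv_nonneg : ∀ a : A, 0 ≤ v a)
    {S : Set A} {δ : WithTop ℚ} (hδ : 0 ≤ δ)
    (hS : ∀ s ∈ S, δ ≤ v s) {z : A} (hz : z ∈ Ideal.span S) : δ ≤ v z := by
  induction hz using Submodule.span_induction with
  | mem s hs => exact hS s hs
  | zero => rw [(hv_top 0).mpr rfl]; exact le_top
  | add a b _ _ ha hb => exact le_trans (le_min ha hb) (hv_add a b)
  | smul r z _ hz =>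
      rw [smul_eq_mul, hv_mul]
      calc δ = 0 + δ := (zero_add δ).symm
        _ ≤ v r + v z := add_le_add (hv_nonneg r) hz

/-- if `x₁,…,x_d` have positive valuation and all sequences obtained from
them by permuting and taking positive powers are almost regular, then the monomial
conjecture holds: `x₁^t ⋯ x_d^t ∉ (x₁^{t+1},…,x_d^{t+1})`. -/
theorem stmt2 {A : Type*} [CommRing A] [IsDomain A]
    (v : A → WithTop ℚ)
    (hv_top : ∀ a : A, v a = ⊤ ↔ a = 0)
    (hv_mul : ∀ a b : A, v (a * b) = v a + v b)
    (hv_add : ∀ a b : A, min (v a) (v b) ≤ v (a + b))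
    (hv_nonneg : ∀ a : A, 0 ≤ v a)
    {d : ℕ} (x : Fin d → A)
    (hxpos : ∀ i, 0 < v (x i))
    (hreg : ∀ (σ : Equiv.Perm (Fin d)) (e : Fin d → ℕ), (∀ i, 0 < e i) →
      AlmostRegular v (fun i => x (σ i) ^ e i))
    (t : ℕ) :
    (∏ i, x i ^ t) ∉ Ideal.span (Set.range fun i => x i ^ (t + 1)) := by
  intro hmem
  have v1 : v 1 = 0 := stmt2_val_one v hv_top hv_mul
  -- a uniform positive rational lower bound for the valuations of the `x i`
  obtain ⟨q, hq0, hq⟩ : ∃ q : ℚ, 0 < q ∧ ∀ i, (q : WithTop ℚ) ≤ v (x i) := by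
    rcases Nat.eq_zero_or_pos d with hd | hd
    · exact ⟨1, one_pos, fun i => absurd i.pos (by omega)⟩
    · have hne : (Finset.univ : Finset (Fin d)).Nonempty :=
        Finset.univ_nonempty_iff.mpr (Fin.pos_iff_nonempty.mp hd)
      set m := Finset.univ.inf' hne (fun i => v (x i)) with hm
      have hminf : ∀ i, m ≤ v (x i) := fun i => Finset.inf'_le _ (Finset.mem_univ i)
      have hm0 : 0 < m := by
        rw [hm, Finset.lt_inf'_iff]
        exact fun i _ => hxpos i
      rcases hmq : m with _ | q
      · refine ⟨1, one_pos, fun i => ?_⟩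
        have := hminf i
        rw [hmq] at this
        exact le_trans le_top this
      · refine ⟨q, ?_, fun i => ?_⟩
        · rw [hmq, WithTop.some_eq_coe] at hm0
          exact_mod_cast hm0
        · rw [← WithTop.some_eq_coe, ← hmq]
          exact hminf i
  -- the key step: elements of arbitrarily small valuation land in (x₁,…,x_d)
  have key : ∀ ε : ℚ, 0 < ε → ∃ c : A, v c < (ε : WithTop ℚ) ∧ c ∈ Ideal.span (Set.range x) := by
    rcases Nat.eq_zero_or_pos t with ht | ht
    · -- t = 0 : hmem directly says 1 ∈ (x₁,…,x_d)
      subst ht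
      intro ε hε
      refine ⟨1, by rw [v1]; exact_mod_cast hε, ?_⟩
      simpa using hmem
    · -- t ≥ 1 : the inductive colon-capturing argument
      have claim : ∀ S : Finset (Fin d), ∀ a : A,
          a * ∏ i ∈ S, x i ^ t ∈
            Ideal.span (((fun i => x i ^ (t + 1)) '' ↑S) ∪ (x '' (↑S)ᶜ)) →
          ∀ ε : ℚ, 0 < ε →
            ∃ c : A, v c < (ε : WithTop ℚ) ∧ c * a ∈ Ideal.span (Set.range x) := by
        intro S
        induction S using Finset.induction_on with
        | empty =>
            intro a ha ε hε
            refine ⟨1, by rw [v1]; exact_mod_cast hε, ?_⟩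
            simpa using ha
        | @insert j S hjS ih =>
            intro a ha ε hε
            have hd : 0 < d := j.pos
            rw [Finset.prod_insert hjS] at ha
            rw [show Ideal.span (((fun i => x i ^ (t + 1)) '' ↑(insert j S)) ∪
                  (x '' (↑(insert j S))ᶜ))
                = Ideal.span (insert (x j ^ (t + 1))
                    (((fun i => x i ^ (t + 1)) '' ↑S) ∪ (x '' (↑(insert j S))ᶜ))) by
              rw [Finset.coe_insert, Set.image_insert_eq, Set.insert_union],
              Ideal.mem_span_insert] at ha
            obtain ⟨b, z, hz, hzeq⟩ := ha
            set T : Set A := ((fun i => x i ^ (t + 1)) '' ↑S) ∪ (x '' (↑(insert j S))ᶜ) with hT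
            set a' : A := a * ∏ i ∈ S, x i ^ t - b * x j with ha'
            have ha'mem : a' * x j ^ t ∈ Ideal.span T := by
              have hz' : a' * x j ^ t = z := by
                rw [ha']
                have hp : x j ^ (t + 1) = x j * x j ^ t := by ring
                rw [hp] at hzeq
                linear_combination hzeq
              rwa [hz']
            -- the permuted power sequence
            set i₀ : Fin d := ⟨d - 1, by omega⟩ with hi₀
            set f : Fin d → ℕ := fun m => if m ∈ S then t + 1 else if m = j then t else 1 with hf
            set σ : Equiv.Perm (Fin d) := Equiv.swap j i₀ with hσ
            have hepos : ∀ i, 0 < f (σ i) := by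
              intro i
              simp only [hf]
              split_ifs <;> omega
            have hAR := hreg σ (fun i => f (σ i)) hepos
            have hσi0 : σ i₀ = j := Equiv.swap_apply_right j i₀
            have hfj : f j = t := by simp [hf, hjS]
            have hset : (fun i => x (σ i) ^ f (σ i)) '' {i : Fin d | i < i₀} = T := by
              have h1 : {i : Fin d | i < i₀} = {i : Fin d | i ≠ i₀} := by
                ext i
                simp only [Set.mem_setOf_eq, Fin.lt_def, ne_eq, Fin.ext_iff, hi₀]
                have := i.isLt
                constructor <;> intro h <;> omega
              have h2 : (fun i => x (σ i) ^ f (σ i)) '' {i : Fin d | i ≠ i₀}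
                  = (fun m => x m ^ f m) '' (σ '' {i : Fin d | i ≠ i₀}) := by
                rw [Set.image_image]
              have h3 : σ '' {i : Fin d | i ≠ i₀} = {m : Fin d | m ≠ j} := by
                have hc : {i : Fin d | i ≠ i₀} = ({i₀} : Set (Fin d))ᶜ := rfl
                rw [hc, Set.image_compl_eq σ.bijective, Set.image_singleton, hσi0]
                rfl
              rw [h1, h2, h3]
              ext zz
              simp only [Set.mem_image, Set.mem_setOf_eq, hT, Set.mem_union,
                Finset.coe_insert, Set.mem_compl_iff, Set.mem_insert_iff, Finset.mem_coe]
              constructor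
              · rintro ⟨m, hm, rfl⟩
                by_cases hmS : m ∈ S
                · exact Or.inl ⟨m, hmS, by simp [hf, hmS]⟩
                · exact Or.inr ⟨m, by simp [hm, hmS], by simp [hf, hmS, hm]⟩
              · rintro (⟨m, hmS, rfl⟩ | ⟨m, hm, rfl⟩)
                · exact ⟨m, fun h => hjS (h ▸ hmS), by simp [hf, hmS]⟩
                · push_neg at hm
                  exact ⟨m, hm.1, by simp [hf, hm.1, hm.2]⟩
            obtain ⟨c, hc, hca'⟩ := hAR i₀ a'
              (by
                show a' * x (σ i₀) ^ f (σ i₀) ∈ _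
                rw [hset, hσi0, hfj]
                exact ha'mem)
              (ε / 2) (by positivity)
            rw [hset] at hca'
            have hTle : Ideal.span T ≤
                Ideal.span (((fun i => x i ^ (t + 1)) '' ↑S) ∪ (x '' (↑S)ᶜ)) := by
              apply Ideal.span_mono
              apply Set.union_subset_union_right
              apply Set.image_mono
              intro m hm
              simp only [Finset.coe_insert, Set.mem_compl_iff, Set.mem_insert_iff,
                Finset.mem_coe] at hm ⊢
              tauto
            have hxj : x j ∈ Ideal.span (((fun i => x i ^ (t + 1)) '' ↑S) ∪ (x '' (↑S)ᶜ)) :=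
              Ideal.subset_span (Or.inr ⟨j, by simpa using hjS, rfl⟩)
            have hnext : (c * a) * ∏ i ∈ S, x i ^ t ∈
                Ideal.span (((fun i => x i ^ (t + 1)) '' ↑S) ∪ (x '' (↑S)ᶜ)) := by
              have heq : (c * a) * ∏ i ∈ S, x i ^ t = c * a' + (c * b) * x j := by
                rw [ha']; ring
              rw [heq]
              exact Ideal.add_mem _ (hTle hca') (Ideal.mul_mem_left _ _ hxj)
            obtain ⟨c', hc', hc'mem⟩ := ih (c * a) hnext (ε / 2) (by positivity)
            refine ⟨c' * c, ?_, by rwa [mul_assoc]⟩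
            rw [hv_mul]
            rcases hq1 : v c' with _ | q1
            · rw [hq1] at hc'; exact absurd hc' (not_lt.mpr le_top)
            rcases hq2 : v c with _ | q2
            · rw [hq2] at hc; exact absurd hc (not_lt.mpr le_top)
            rw [hq1, WithTop.some_eq_coe] at hc'
            rw [hq2, WithTop.some_eq_coe] at hc
            have h1 : q1 < ε / 2 := by exact_mod_cast hc'
            have h2 : q2 < ε / 2 := by exact_mod_cast hc
            rw [WithTop.some_eq_coe, WithTop.some_eq_coe]
            exact_mod_cast (by linarith : q1 + q2 < ε)
      intro ε hε
      have hstart : (1 : A) * ∏ i ∈ Finset.univ, x i ^ t ∈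
          Ideal.span (((fun i => x i ^ (t + 1)) '' ↑(Finset.univ : Finset (Fin d))) ∪
            (x '' (↑(Finset.univ : Finset (Fin d)))ᶜ)) := by
        simpa using hmem
      obtain ⟨c, hc, hcmem⟩ := claim Finset.univ 1 hstart ε hε
      exact ⟨c, hc, by simpa using hcmem⟩
  -- conclude: an element of (x₁,…,x_d) has valuation ≥ q, contradiction
  obtain ⟨c, hc, hcmem⟩ := key q hq0
  have hge : (q : WithTop ℚ) ≤ v c := by
    refine stmt2_le_val_of_mem_span v hv_top hv_mul hv_add hv_nonneg ?_ ?_ hcmem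
    · exact_mod_cast hq0.le
    · rintro s ⟨i, rfl⟩
      exact hq i
  exact absurd hc (not_lt.mpr hge)
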